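/- Let λ be a singular cardinal with θ = cf(λ) ≤ κ < λ, let D be an ultrafilter on κ, and let ⟨λ_i : i < κ⟩ be a sequence of cardinals with lim_D(⟨λ_i : i < κ⟩) = λ and |∏_{i<κ} λ_i / D| = λ. Then it is not the case that for every β < λ the set {i < κ : β < cf(λ_i)} belongs to D; in particular, lim_D(⟨cf(λ_i) : i < κ⟩) < λ. -/

import Mathlib

universe u

open Cardinal Set

/-- Members of the product `∏_{i} λ_i`: functions choosing an ordinal below `(λ i).ord`
for every index `i`. -/
def ProdFun {ι : Type u} (lam : ι → Cardinal.{u}) : Type (u + 1) :=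
  {f : ι → Ordinal.{u} // ∀ i, f i < (lam i).ord}

/-- `D`-equality of members of the product. -/
def prodEquiv {ι : Type u} (D : Ultrafilter ι) (lam : ι → Cardinal.{u})
    (f g : ProdFun lam) : Prop :=
  {i | f.1 i = g.1 i} ∈ D

/-- The reduced product `∏_{i} λ_i / D`. -/
def ProdQuot {ι : Type u} (D : Ultrafilter ι) (lam : ι → Cardinal.{u}) : Type (u + 1) :=
  Quot (prodEquiv D lam)

/-- The cardinality of the reduced product `∏_{i} λ_i / D`. -/
noncomputable def prodCard {ι : Type u} (D : Ultrafilter ι) (lam : ι → Cardinal.{u}) :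
    Cardinal.{u + 1} :=
  Cardinal.mk (ProdQuot D lam)

/-- `μ = lim_D ⟨λ_i : i < κ⟩` : for every `β < μ`, the set `{i : β < λ_i ≤ μ}` is in `D`. -/
def IsLimD {ι : Type u} (D : Ultrafilter ι) (lam : ι → Cardinal.{u}) (μ : Cardinal.{u}) :
    Prop :=
  ∀ β < μ, {i | β < lam i ∧ lam i ≤ μ} ∈ D

section Aux

variable {ι : Type u} (D : Ultrafilter ι) (lam : ι → Cardinal.{u})

/-- Strict `D`-domination on the product. -/
def prodLt (f g : ProdFun lam) : Prop := {i | f.1 i < g.1 i} ∈ D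

theorem prodEquiv_equivalence : Equivalence (prodEquiv D lam) where
  refl f := by
    have : {i | f.1 i = f.1 i} = Set.univ := by ext i; simp
    simpa only [prodEquiv, this, Set.setOf_true] using Ultrafilter.mem_coe.1 Filter.univ_mem
  symm {f g} h := by
    have : {i | g.1 i = f.1 i} = {i | f.1 i = g.1 i} := by ext i; exact eq_comm
    simpa only [prodEquiv, this] using h
  trans {f g h} h1 h2 := by
    have hm := Filter.inter_mem (Ultrafilter.mem_coe.2 h1) (Ultrafilter.mem_coe.2 h2)
    refine Ultrafilter.mem_coe.1 (Filter.mem_of_superset hm ?_)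
    intro i hi
    exact hi.1.trans hi.2

theorem prodLt_trans {f g h : ProdFun lam} (h1 : prodLt D lam f g) (h2 : prodLt D lam g h) :
    prodLt D lam f h := by
  have hm := Filter.inter_mem (Ultrafilter.mem_coe.2 h1) (Ultrafilter.mem_coe.2 h2)
  refine Ultrafilter.mem_coe.1 (Filter.mem_of_superset hm ?_)
  intro i hi
  have h1' : f.1 i < g.1 i := hi.1
  have h2' : g.1 i < h.1 i := hi.2
  exact h1'.trans h2'

theorem prodLt_ne {f g : ProdFun lam} (h : prodLt D lam f g) : ¬ prodEquiv D lam f g := by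
  intro he
  have := Filter.inter_mem (Ultrafilter.mem_coe.2 h) (Ultrafilter.mem_coe.2 he)
  obtain ⟨i, hi1, hi2⟩ := Filter.nonempty_of_mem this
  exact absurd hi2 (ne_of_lt hi1)

theorem exists_bound {la : Cardinal.{u}} (haleph : ℵ₀ < la)
    (H : ∀ β < la, {i | β < (lam i).ord.cof} ∈ D)
    (f₀ : ProdFun lam) (σ : Type u) (hσ : #σ < la) (F : σ → ProdFun lam) :
    ∃ g : ProdFun lam, ∀ s, prodLt D lam (F s) g := by
  classical
  set β : Cardinal.{u} := #σ ⊔ ℵ₀ with hβ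
  have hβla : β < la := max_lt hσ haleph
  have hA := H β hβla
  refine ⟨⟨fun i => if h : β < (lam i).ord.cof then Order.succ (⨆ s, (F s).1 i)
      else f₀.1 i, ?_⟩, ?_⟩
  · intro i
    by_cases h : β < (lam i).ord.cof
    · simp only [dif_pos h]
      have hlimi : Order.IsSuccLimit ((lam i).ord) :=
        Ordinal.one_lt_cof_iff.1 (Ordinal.aleph0_le_cof_iff.1 ((le_sup_right.trans_lt h).le))
      have hsup : (⨆ s, (F s).1 i) < (lam i).ord :=
        Ordinal.iSup_lt_of_lt_cof (le_sup_left.trans_lt h) (fun s => (F s).2 i)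
      exact hlimi.succ_lt hsup
    · simp only [dif_neg h]
      exact f₀.2 i
  · intro s
    refine Ultrafilter.mem_coe.1 (Filter.mem_of_superset (Ultrafilter.mem_coe.2 hA) ?_)
    intro i hi
    have hi' : β < (lam i).ord.cof := hi
    simp only [prodLt, Set.mem_setOf_eq, dif_pos hi']
    exact (Ordinal.le_iSup (fun s => (F s).1 i) s).trans_lt (Order.lt_succ _)

end Aux

theorem stmt_17 {ι : Type u} (κ θ la : Cardinal.{u}) (hι : #ι = κ)
    (hla : ℵ₀ ≤ la) (hsing : ¬ la.IsRegular)
    (hθ : θ = la.ord.cof) (hθκ : θ ≤ κ) (hκla : κ < la)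
    (D : Ultrafilter ι) (lam : ι → Cardinal.{u})
    (hlim : IsLimD D lam la)
    (hcard : prodCard D lam = Cardinal.lift.{u + 1} la) :
    (¬ ∀ β < la, {i | β < (lam i).ord.cof} ∈ D) ∧
      ∀ μ : Cardinal.{u}, IsLimD D (fun i => (lam i).ord.cof) μ → μ < la := by
  have hθla : la.ord.cof < la :=
    lt_of_le_of_ne (Ordinal.cof_ord_le la) (fun h => hsing ⟨hla, h.ge⟩)
  have haleph : ℵ₀ < la :=
    lt_of_le_of_lt (Ordinal.aleph0_le_cof_iff.2 (Ordinal.one_lt_cof_iff.2 (Cardinal.isSuccLimit_ord hla))) hθla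
  have key : ¬ ∀ β < la, {i | β < (lam i).ord.cof} ∈ D := by
    intro H
    -- the reduced product is nonempty
    have hne : Nonempty (ProdQuot D lam) := by
      rw [← Cardinal.mk_ne_zero_iff]
      have : prodCard D lam ≠ 0 := by
        rw [hcard]
        simp only [ne_eq, Cardinal.lift_eq_zero]
        exact (haleph.trans_le' (by simp)).ne'
      exact this
    obtain ⟨q0⟩ := hne
    obtain ⟨f₀, -⟩ := q0.exists_rep
    -- an enumeration of the reduced product along `la`
    have hT : #(la.ord.ToType) = la := by exact Cardinal.mk_ord_toType la
    have hE : Nonempty (la.ord.ToType ≃ ProdQuot D lam) := by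
      refine Cardinal.lift_mk_eq'.{u, u+1}.1 ?_
      rw [hT, Cardinal.lift_id'.{u, u+1}]
      exact hcard.symm
    obtain ⟨e⟩ := hE
    let F : la.ord.ToType → ProdFun lam := fun t => (e t).out
    -- a cofinal set of size `cof la.ord < la`
    haveI hwo : IsWellOrder la.ord.ToType (· < ·) := isWellOrder_lt
    obtain ⟨S, hSub, hScard⟩ := Order.exists_cof_eq la.ord.ToType
    rw [Ordinal.cof_toType] at hScard
    have hScard' : #S < la := hScard ▸ hθla
    -- bound each initial segment
    have bchoice : ∀ s : S, ∃ g, ∀ t : {t : la.ord.ToType // t ≤ s.1},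
        prodLt D lam (F t.1) g := by
      intro s
      apply exists_bound D lam haleph H f₀
      have heq : {t : la.ord.ToType | t ≤ (s : la.ord.ToType)}
          = insert (s : la.ord.ToType) (Iio (s : la.ord.ToType)) := by
        ext t; simp [le_iff_lt_or_eq, or_comm]
      have h1 : #{t : la.ord.ToType // t ≤ (s : la.ord.ToType)}
          ≤ #(Iio (s : la.ord.ToType)) + 1 := by
        rw [show {t : la.ord.ToType // t ≤ (s : la.ord.ToType)}
            = ↥{t : la.ord.ToType | t ≤ (s : la.ord.ToType)} from rfl, heq]
        exact Cardinal.mk_insert_le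
      exact h1.trans_lt (Cardinal.add_lt_of_lt hla
        (Cardinal.mk_Iio_toType_ord_lt _) (lt_of_lt_of_le Cardinal.one_lt_aleph0 hla))
    choose g hg using bchoice
    -- bound the bounds
    obtain ⟨G, hG⟩ := exists_bound D lam haleph H f₀ S hScard' g
    have hdom : ∀ t, prodLt D lam (F t) G := by
      intro t
      obtain ⟨s, hsS, hst⟩ := hSub t
      exact prodLt_trans D lam (hg ⟨s, hsS⟩ ⟨t, hst⟩) (hG ⟨s, hsS⟩)
    -- contradiction: `G` is equivalent to some `F t` but strictly above it
    set t := e.symm (Quot.mk _ G) with ht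
    have hFt : prodEquiv D lam (F t) G := by
      have h1 : Quot.mk (prodEquiv D lam) (F t) = Quot.mk (prodEquiv D lam) G := by
        show Quot.mk _ (e t).out = _
        rw [show Quot.mk (prodEquiv D lam) (Quot.out (e t)) = e t from Quot.out_eq (e t), ht,
          ]
        exact e.apply_symm_apply _
      exact ((prodEquiv_equivalence D lam).eqvGen_iff).1 (Quot.eq.1 h1)
    exact prodLt_ne D lam (hdom t) hFt
  refine ⟨key, ?_⟩
  intro μ hμ
  by_contra hlt
  push_neg at hlt
  apply key
  intro β hβ
  have hm := hμ β (hβ.trans_le hlt)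
  exact Ultrafilter.mem_coe.1 (Filter.mem_of_superset (Ultrafilter.mem_coe.2 hm)
    (fun i hi => hi.1))
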